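/- arXiv:1501.01156 — 2 statements merged into one kernel-verified Lean document; each statement's English description precedes it below -/
import Mathlib

section
/- For real numbers α > 0 and β, ∫_{ℝ} arctan(αx + β)/(1 + x²) dx = π · arctan(β/(α + 1)). -/
open Real MeasureTheory Filter Set Topology

lemma ftc_line {F f : ℝ → ℝ} {La Lb : ℝ}
    (hderiv : ∀ x, HasDerivAt F (f x) x) (hf : Integrable f)
    (hbot : Tendsto F atBot (𝓝 La)) (htop : Tendsto F atTop (𝓝 Lb)) :
    ∫ x, f x = Lb - La := by
  have h1 : ∫ x in Iic (0:ℝ), f x = F 0 - La :=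
    integral_Iic_of_hasDerivAt_of_tendsto' (fun x _ => hderiv x) hf.integrableOn hbot
  have h2 : ∫ x in Ioi (0:ℝ), f x = Lb - F 0 :=
    integral_Ioi_of_hasDerivAt_of_tendsto' (fun x _ => hderiv x) hf.integrableOn htop
  rw [← intervalIntegral.integral_Iic_add_Ioi hf.integrableOn hf.integrableOn, h1, h2]; ring

lemma integrable_of_le_inv_one_add_sq {f : ℝ → ℝ} (c : ℝ)
    (hb : ∀ x, |f x| ≤ c * (1 + x ^ 2)⁻¹) (hc : Continuous f) : Integrable f := by
  refine Integrable.mono' (integrable_inv_one_add_sq.const_mul c) hc.aestronglyMeasurable ?_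
  filter_upwards with x
  simpa using hb x

lemma tendsto_inv_atBot_zero' : Tendsto (fun x : ℝ => x⁻¹) atBot (𝓝 0) := by
  have h : (fun x : ℝ => x⁻¹) = fun x : ℝ => -((-x)⁻¹) := by funext x; rw [inv_neg, neg_neg]
  rw [h]
  have := ((tendsto_inv_atTop_zero (𝕜 := ℝ)).comp tendsto_neg_atBot_atTop).neg
  simpa [Function.comp] using this

lemma tendsto_qr (α β : ℝ) (hα : 0 < α) {l : Filter ℝ}
    (hl : Tendsto (fun x : ℝ => x⁻¹) l (𝓝 0)) (hne : ∀ᶠ x in l, x ≠ 0) :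
    Tendsto (fun x => (1 + x ^ 2) / (1 + (α * x + β) ^ 2)) l (𝓝 (1 / α ^ 2)) := by
  have hcont : ContinuousAt (fun t : ℝ => (t ^ 2 + 1) / (t ^ 2 + (α + β * t) ^ 2)) 0 := by
    apply ContinuousAt.div (by fun_prop) (by fun_prop)
    simp
    positivity
  have h := hcont.tendsto.comp hl
  simp only [Function.comp_def] at h
  have h2 : ((0:ℝ) ^ 2 + 1) / ((0:ℝ) ^ 2 + (α + β * 0) ^ 2) = 1 / α ^ 2 := by norm_num
  rw [h2] at h
  refine Tendsto.congr' ?_ h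
  filter_upwards [hne] with x hx
  have hx2 : (x : ℝ) ^ 2 ≠ 0 := pow_ne_zero _ hx
  rw [div_eq_div_iff (by positivity) (by positivity)]
  field_simp

lemma tendsto_xq {l : Filter ℝ}
    (hl : Tendsto (fun x : ℝ => x⁻¹) l (𝓝 0)) (hne : ∀ᶠ x in l, x ≠ 0) :
    Tendsto (fun x : ℝ => x / (2 * (1 + x ^ 2))) l (𝓝 0) := by
  have hcont : ContinuousAt (fun t : ℝ => t / (2 * (t ^ 2 + 1))) 0 := by
    apply ContinuousAt.div (by fun_prop) (by fun_prop); norm_num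
  have h := hcont.tendsto.comp hl
  have h2 : ((0:ℝ) / (2 * ((0:ℝ) ^ 2 + 1))) = 0 := by norm_num
  rw [h2] at h
  refine Tendsto.congr' ?_ h
  filter_upwards [hne] with x hx
  simp only [Function.comp]
  rw [div_eq_div_iff (by positivity) (by positivity)]
  field_simp

lemma tendsto_arctan_affine_atTop (α β : ℝ) (hα : 0 < α) :
    Tendsto (fun x : ℝ => arctan (α * x + β)) atTop (𝓝 (π / 2)) := by
  refine (tendsto_nhds_of_tendsto_nhdsWithin tendsto_arctan_atTop).comp ?_
  exact tendsto_atTop_add_const_right _ β (tendsto_id.const_mul_atTop hα)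

lemma tendsto_arctan_affine_atBot (α β : ℝ) (hα : 0 < α) :
    Tendsto (fun x : ℝ => arctan (α * x + β)) atBot (𝓝 (-(π / 2))) := by
  refine (tendsto_nhds_of_tendsto_nhdsWithin tendsto_arctan_atBot).comp ?_
  exact tendsto_atBot_add_const_right _ β (tendsto_id.const_mul_atBot hα)

lemma integral_rat (α β : ℝ) (hα : 0 < α) :
    ∫ x : ℝ, ((1 + x ^ 2) * (1 + (α * x + β) ^ 2))⁻¹
      = π * (α + 1) / ((α + 1) ^ 2 + β ^ 2) := by
  have hq : ∀ x : ℝ, (0:ℝ) < 1 + x ^ 2 := fun x => by positivity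
  have hr : ∀ x : ℝ, (0:ℝ) < 1 + (α * x + β) ^ 2 := fun x => by positivity
  have hint : Integrable (fun x : ℝ => ((1 + x ^ 2) * (1 + (α * x + β) ^ 2))⁻¹) := by
    apply integrable_of_le_inv_one_add_sq 1
    · intro x
      rw [abs_of_nonneg (by positivity), one_mul]
      exact inv_anti₀ (hq x)
        (le_mul_of_one_le_right (hq x).le (by nlinarith [sq_nonneg (α * x + β)]))
    · exact (Continuous.mul (by fun_prop) (by fun_prop)).inv₀
        fun x => (mul_pos (hq x) (hr x)).ne'
  by_cases hdeg : (1 - α) ^ 2 + β ^ 2 = 0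
  · have hα1 : α = 1 := by nlinarith [sq_nonneg (1 - α), sq_nonneg β]
    have hβ0 : β = 0 := by nlinarith [sq_nonneg (1 - α), sq_nonneg β]
    subst hα1 hβ0
    have hder : ∀ x : ℝ, HasDerivAt (fun x : ℝ => x / (2 * (1 + x ^ 2)) + arctan x / 2)
        (((1 + x ^ 2) * (1 + (1 * x + 0) ^ 2))⁻¹) x := by
      intro x
      have d1 : HasDerivAt (fun x : ℝ => 2 * (1 + x ^ 2)) (2 * (2 * x ^ 1)) x := by
        exact (((hasDerivAt_pow 2 x).const_add 1).const_mul 2)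
      have d2 := (hasDerivAt_id x).div d1 (by positivity)
      have d3 := (hasDerivAt_arctan x).div_const 2
      refine (d2.add d3).congr_deriv ?_
      have h := (hq x).ne'
      simp only [id]
      field_simp
      ring
    have hbot : Tendsto (fun x : ℝ => x / (2 * (1 + x ^ 2)) + arctan x / 2) atBot
        (𝓝 (0 + -(π / 2) / 2)) := by
      exact (tendsto_xq tendsto_inv_atBot_zero' (eventually_ne_atBot 0)).add
        ((tendsto_nhds_of_tendsto_nhdsWithin tendsto_arctan_atBot).div_const 2)
    have htop : Tendsto (fun x : ℝ => x / (2 * (1 + x ^ 2)) + arctan x / 2) atTop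
        (𝓝 (0 + (π / 2) / 2)) := by
      exact (tendsto_xq tendsto_inv_atTop_zero (eventually_ne_atTop 0)).add
        ((tendsto_nhds_of_tendsto_nhdsWithin tendsto_arctan_atTop).div_const 2)
    rw [ftc_line hder hint hbot htop]
    norm_num
    ring
  · set S : ℝ := ((1 + α) ^ 2 + β ^ 2) * ((1 - α) ^ 2 + β ^ 2) with hSdef
    have hS : S ≠ 0 := mul_ne_zero (by positivity) hdeg
    obtain ⟨A, hA⟩ : ∃ A : ℝ, A = -(2 * α * β) / S := ⟨_, rfl⟩
    obtain ⟨B, hB⟩ : ∃ B : ℝ, B = (1 + β ^ 2 - α ^ 2) / S := ⟨_, rfl⟩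
    obtain ⟨E, hE⟩ : ∃ E : ℝ, E = -A * β - B * α := ⟨_, rfl⟩
    set F : ℝ → ℝ := fun x =>
      A / 2 * log ((1 + x ^ 2) / (1 + (α * x + β) ^ 2)) + B * arctan x
        + E * arctan (α * x + β) with hF
    have hder : ∀ x : ℝ, HasDerivAt F (((1 + x ^ 2) * (1 + (α * x + β) ^ 2))⁻¹) x := by
      intro x
      have hq' := (hq x).ne'
      have hr' := (hr x).ne'
      have d1 : HasDerivAt (fun x : ℝ => 1 + x ^ 2) (2 * x ^ 1) x :=
        (hasDerivAt_pow 2 x).const_add 1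
      have din : HasDerivAt (fun x : ℝ => α * x + β) (α * 1) x :=
        ((hasDerivAt_id x).const_mul α).add_const β
      have d2 : HasDerivAt (fun x : ℝ => 1 + (α * x + β) ^ 2)
          (2 * (α * x + β) ^ 1 * (α * 1)) x := (din.pow 2).const_add 1
      have d3 := ((d1.div d2 hr').log (div_ne_zero hq' hr')).const_mul (A / 2)
      have d4 := (hasDerivAt_arctan x).const_mul B
      have d5 := din.arctan.const_mul E
      refine ((d3.add d4).add d5).congr_deriv ?_
      simp only [Pi.div_apply]
      rw [hE, hA, hB]
      field_simp
      ring
    have hbot : Tendsto F atBot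
        (𝓝 (A / 2 * log (1 / α ^ 2) + B * -(π / 2) + E * -(π / 2))) := by
      refine (Tendsto.add ?_ ?_).add ?_
      · exact ((tendsto_qr α β hα tendsto_inv_atBot_zero' (eventually_ne_atBot 0)).log
          (by positivity)).const_mul (A / 2)
      · exact (tendsto_nhds_of_tendsto_nhdsWithin tendsto_arctan_atBot).const_mul B
      · exact (tendsto_arctan_affine_atBot α β hα).const_mul E
    have htop : Tendsto F atTop
        (𝓝 (A / 2 * log (1 / α ^ 2) + B * (π / 2) + E * (π / 2))) := by
      refine (Tendsto.add ?_ ?_).add ?_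
      · exact ((tendsto_qr α β hα tendsto_inv_atTop_zero (eventually_ne_atTop 0)).log
          (by positivity)).const_mul (A / 2)
      · exact (tendsto_nhds_of_tendsto_nhdsWithin tendsto_arctan_atTop).const_mul B
      · exact (tendsto_arctan_affine_atTop α β hα).const_mul E
    rw [ftc_line hder hint hbot htop]
    have h1 : ((α:ℝ) + 1) ^ 2 + β ^ 2 ≠ 0 := by positivity
    rw [hE, hA, hB, hSdef]
    field_simp
    ring

open Real in
/-- For `α > 0` and `β ∈ ℝ`, `∫_ℝ arctan(αx+β)/(1+x²) dx = π arctan(β/(α+1))`. -/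
theorem integral_arctan_affine_div_one_add_sq (α β : ℝ) (hα : 0 < α) :
    ∫ x : ℝ, arctan (α * x + β) / (1 + x ^ 2) = π * arctan (β / (α + 1)) := by
  have hq : ∀ x : ℝ, (0:ℝ) < 1 + x ^ 2 := fun x => by positivity
  have hα1 : (0:ℝ) < α + 1 := by linarith
  set I : ℝ → ℝ := fun b => ∫ x : ℝ, arctan (α * x + b) / (1 + x ^ 2) with hI
  have hint : ∀ b : ℝ, Integrable (fun x : ℝ => arctan (α * x + b) / (1 + x ^ 2)) := by
    intro b
    apply integrable_of_le_inv_one_add_sq (π / 2)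
    · intro x
      rw [abs_div, abs_of_nonneg (hq x).le, div_eq_mul_inv]
      gcongr
      rw [abs_le]
      constructor
      · linarith [neg_pi_div_two_lt_arctan (α * x + b)]
      · linarith [arctan_lt_pi_div_two (α * x + b)]
    · exact Continuous.div (continuous_arctan.comp (by fun_prop)) (by fun_prop)
        fun x => (hq x).ne'
  have hIderiv : ∀ b : ℝ, HasDerivAt I (π * (α + 1) / ((α + 1) ^ 2 + b ^ 2)) b := by
    intro b
    have key := hasDerivAt_integral_of_dominated_loc_of_deriv_le (μ := volume)
      (F := fun b x => arctan (α * x + b) / (1 + x ^ 2))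
      (F' := fun b x => ((1 + x ^ 2) * (1 + (α * x + b) ^ 2))⁻¹)
      (bound := fun x => (1 + x ^ 2)⁻¹) (x₀ := b) (Metric.ball_mem_nhds b one_pos)
      (Eventually.of_forall fun b' => (hint b').aestronglyMeasurable)
      (hint b)
      (Continuous.aestronglyMeasurable (by
        exact (Continuous.mul (by fun_prop) (by fun_prop)).inv₀
          fun x => (mul_pos (hq x) (by positivity : (0:ℝ) < 1 + (α * x + b) ^ 2)).ne' ))
      ?_ integrable_inv_one_add_sq ?_
    · have := key.2
      rwa [integral_rat α b hα] at this
    · filter_upwards with x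
      intro b' _
      rw [norm_inv, norm_of_nonneg (by positivity)]
      exact inv_anti₀ (hq x)
        (le_mul_of_one_le_right (hq x).le (by nlinarith [sq_nonneg (α * x + b')]))
    · filter_upwards with x
      intro b' _
      have din : HasDerivAt (fun b : ℝ => α * x + b) 1 b' := (hasDerivAt_id b').const_add (α * x)
      have d := din.arctan.div_const (1 + x ^ 2)
      refine d.congr_deriv ?_
      rw [mul_one, one_div, div_eq_mul_inv, mul_inv]
      ring
  have hGderiv : ∀ b : ℝ, HasDerivAt (fun b : ℝ => π * arctan (b / (α + 1)))
      (π * (α + 1) / ((α + 1) ^ 2 + b ^ 2)) b := by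
    intro b
    have din : HasDerivAt (fun b : ℝ => b / (α + 1)) (1 / (α + 1)) b := by
      simpa using (hasDerivAt_id b).div_const (α + 1)
    have d := din.arctan.const_mul π
    refine d.congr_deriv ?_
    have h2 : (1:ℝ) + (b / (α + 1)) ^ 2 ≠ 0 := by positivity
    field_simp
  have hconst : ∀ b : ℝ, I b - π * arctan (b / (α + 1)) = I 0 - π * arctan (0 / (α + 1)) := by
    intro b
    have hd : ∀ b : ℝ, HasDerivAt (fun b => I b - π * arctan (b / (α + 1))) 0 b := by
      intro b
      have := (hIderiv b).sub (hGderiv b)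
      simp only [sub_self] at this
      exact this
    exact is_const_of_deriv_eq_zero (fun b => (hd b).differentiableAt)
      (fun b => (hd b).deriv) b 0
  have hI0 : I 0 = 0 := by
    have hodd : ∀ x : ℝ, arctan (α * (-x) + 0) / (1 + (-x) ^ 2)
        = -(arctan (α * x + 0) / (1 + x ^ 2)) := by
      intro x
      simp [mul_neg, arctan_neg, neg_div]
    have h1 : I 0 = ∫ x : ℝ, arctan (α * (-x) + 0) / (1 + (-x) ^ 2) :=
      (integral_neg_eq_self _ _).symm
    have h2 : I 0 = -I 0 := by
      calc I 0 = ∫ x : ℝ, arctan (α * (-x) + 0) / (1 + (-x) ^ 2) := h1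
        _ = ∫ x : ℝ, -(arctan (α * x + 0) / (1 + x ^ 2)) := by simp_rw [hodd]
        _ = -I 0 := integral_neg _
    linarith
  have := hconst β
  rw [hI0] at this
  simp only [zero_div, arctan_zero, mul_zero, sub_zero] at this
  linarith
end

section
/- For real numbers α > 0 and β, ∫_{ℝ} 1/((1+x²)(1+(αx+β)²)) dx = π(α+1)/((α+1)² + β²). -/
set_option maxHeartbeats 2000000

open Real MeasureTheory Filter Topology in
/-- For `α > 0` and `β ∈ ℝ`, `∫_ℝ 1/((1+x²)(1+(αx+β)²)) dx = π(α+1)/((α+1)²+β²)`. -/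
theorem integral_one_div_mul_one_add_sq (α β : ℝ) (hα : 0 < α) :
    ∫ x : ℝ, 1 / ((1 + x ^ 2) * (1 + (α * x + β) ^ 2))
      = π * (α + 1) / ((α + 1) ^ 2 + β ^ 2) := by
  have hcont : Continuous fun x : ℝ => (1 + x ^ 2) * (1 + (α * x + β) ^ 2) := by continuity
  have hint : Integrable fun x : ℝ => 1 / ((1 + x ^ 2) * (1 + (α * x + β) ^ 2)) := by
    apply integrable_inv_one_add_sq.mono'
    · exact (continuous_const.div hcont (fun x => by positivity)).aestronglyMeasurable
    · filter_upwards with x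
      rw [Real.norm_eq_abs, abs_of_nonneg (by positivity), ← one_div]
      apply one_div_le_one_div_of_le (by positivity)
      nlinarith [sq_nonneg x, sq_nonneg (α * x + β), sq_nonneg ((α * x + β) * x)]
  have hinvbot : Tendsto (fun x : ℝ => x⁻¹) atBot (𝓝 (0:ℝ)) := by
    rw [tendsto_zero_iff_abs_tendsto_zero]
    apply (tendsto_abs_atBot_atTop.inv_tendsto_atTop).congr
    intro x
    simp [abs_inv]
  by_cases hdeg : α = 1 ∧ β = 0
  · obtain ⟨h1, h2⟩ := hdeg
    subst h1; subst h2
    have hF : ∀ x : ℝ, HasDerivAt (fun x : ℝ => (Real.arctan x + x / (1 + x ^ 2)) / 2)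
        (1 / ((1 + x ^ 2) * (1 + (1 * x + 0) ^ 2))) x := by
      intro x
      have hx1 : (0:ℝ) < 1 + x ^ 2 := by positivity
      have h1 : HasDerivAt (fun x : ℝ => 1 + x ^ 2) (2 * x) x := by
        simpa using ((hasDerivAt_pow 2 x).const_add 1)
      have hdiv : HasDerivAt (fun x : ℝ => x / (1 + x ^ 2))
          ((1 * (1 + x ^ 2) - x * (2 * x)) / (1 + x ^ 2) ^ 2) x :=
        (hasDerivAt_id x).div h1 hx1.ne'
      have := ((hasDerivAt_arctan x).add hdiv).div_const 2
      refine this.congr_deriv ?_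
      field_simp
      ring
    have hsmall : Tendsto (fun t : ℝ => t / (t ^ 2 + 1)) (𝓝 0) (𝓝 0) := by
      have : ContinuousAt (fun t : ℝ => t / (t ^ 2 + 1)) 0 := by
        apply ContinuousAt.div (by fun_prop) (by fun_prop)
        norm_num
      simpa using this.tendsto
    have heq : ∀ᶠ x : ℝ in atTop, (fun t : ℝ => t / (t ^ 2 + 1)) x⁻¹ = x / (1 + x ^ 2) := by
      filter_upwards [eventually_ne_atTop (0:ℝ)] with x hx
      field_simp
    have heqb : ∀ᶠ x : ℝ in atBot, (fun t : ℝ => t / (t ^ 2 + 1)) x⁻¹ = x / (1 + x ^ 2) := by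
      filter_upwards [eventually_ne_atBot (0:ℝ)] with x hx
      field_simp
    have htop : Tendsto (fun x : ℝ => (Real.arctan x + x / (1 + x ^ 2)) / 2) atTop
        (𝓝 ((π / 2 + 0) / 2)) :=
      (((tendsto_nhds_of_tendsto_nhdsWithin tendsto_arctan_atTop)).add
        ((hsmall.comp tendsto_inv_atTop_zero).congr' heq)).div_const 2
    have hbot : Tendsto (fun x : ℝ => (Real.arctan x + x / (1 + x ^ 2)) / 2) atBot
        (𝓝 ((-(π / 2) + 0) / 2)) :=
      (((tendsto_nhds_of_tendsto_nhdsWithin tendsto_arctan_atBot)).add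
        ((hsmall.comp hinvbot).congr' heqb)).div_const 2
    rw [MeasureTheory.integral_of_hasDerivAt_of_tendsto hF hint hbot htop]
    norm_num
    try ring
  · -- general case
    set E : ℝ := ((α + 1) ^ 2 + β ^ 2) * ((α - 1) ^ 2 + β ^ 2) with hEdef
    have hE1 : ((α + 1) ^ 2 + β ^ 2) ≠ 0 := by positivity
    have hE2 : ((α - 1) ^ 2 + β ^ 2) ≠ 0 := by
      rcases (not_and_or.mp hdeg) with h | h
      · intro hc
        apply h
        nlinarith [sq_nonneg (α - 1), sq_nonneg β]
      · intro hc
        apply h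
        nlinarith [sq_nonneg (α - 1), sq_nonneg β]
    have hE : E ≠ 0 := mul_ne_zero hE1 hE2
    set A : ℝ := -2 * α * β / E with hA
    set B : ℝ := (1 + β ^ 2 - α ^ 2) / E with hB
    set k : ℝ := α * (α ^ 2 + β ^ 2 - 1) / E with hk
    set F : ℝ → ℝ := fun x =>
      A / 2 * (Real.log (1 + x ^ 2) - Real.log (1 + (α * x + β) ^ 2))
        + B * Real.arctan x + k * Real.arctan (α * x + β) with hF
    have hasF : ∀ x : ℝ, HasDerivAt F (1 / ((1 + x ^ 2) * (1 + (α * x + β) ^ 2))) x := by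
      intro x
      have hx1 : (0:ℝ) < 1 + x ^ 2 := by positivity
      have hx2 : (0:ℝ) < 1 + (α * x + β) ^ 2 := by positivity
      have h1 : HasDerivAt (fun x : ℝ => 1 + x ^ 2) (2 * x) x := by
        simpa using ((hasDerivAt_pow 2 x).const_add 1)
      have hu : HasDerivAt (fun x : ℝ => α * x + β) α x := by
        simpa using ((hasDerivAt_id x).const_mul α).add_const β
      have h2 : HasDerivAt (fun x : ℝ => 1 + (α * x + β) ^ 2) (2 * (α * x + β) * α) x := by
        have := ((hu.pow 2).const_add 1)
        simpa using this
      have d1 : HasDerivAt (fun x : ℝ => Real.log (1 + x ^ 2)) (2 * x / (1 + x ^ 2)) x :=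
        h1.log hx1.ne'
      have d2 : HasDerivAt (fun x : ℝ => Real.log (1 + (α * x + β) ^ 2))
          (2 * (α * x + β) * α / (1 + (α * x + β) ^ 2)) x := h2.log hx2.ne'
      have d4 : HasDerivAt (fun x : ℝ => Real.arctan (α * x + β))
          (1 / (1 + (α * x + β) ^ 2) * α) x := hu.arctan
      have := (((d1.sub d2).const_mul (A / 2)).add
        ((hasDerivAt_arctan x).const_mul B)).add (d4.const_mul k)
      refine this.congr_deriv ?_
      rw [hA, hB, hk]
      field_simp
      ring
    have hratio : Tendsto (fun t : ℝ => (t ^ 2 + 1) / (t ^ 2 + (α + β * t) ^ 2)) (𝓝 0)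
        (𝓝 ((α ^ 2)⁻¹)) := by
      have hc : ContinuousAt (fun t : ℝ => (t ^ 2 + 1) / (t ^ 2 + (α + β * t) ^ 2)) 0 := by
        apply ContinuousAt.div (by fun_prop) (by fun_prop)
        simpa using (by positivity : (α:ℝ) ^ 2 ≠ 0)
      simpa using hc.tendsto
    have heqt : ∀ x : ℝ, x ≠ 0 →
        (fun t : ℝ => (t ^ 2 + 1) / (t ^ 2 + (α + β * t) ^ 2)) x⁻¹
          = (1 + x ^ 2) / (1 + (α * x + β) ^ 2) := by
      intro x hx
      have hx2 : (1:ℝ) + (α * x + β) ^ 2 ≠ 0 := by positivity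
      have hd : x⁻¹ ^ 2 + (α + β * x⁻¹) ^ 2 ≠ 0 := by
        have : x⁻¹ ^ 2 + (α + β * x⁻¹) ^ 2 = (1 + (α * x + β) ^ 2) / x ^ 2 := by
          field_simp
          try ring
        rw [this]
        positivity
      field_simp
      try ring
    have hlog : ∀ x : ℝ, Real.log ((1 + x ^ 2) / (1 + (α * x + β) ^ 2))
        = Real.log (1 + x ^ 2) - Real.log (1 + (α * x + β) ^ 2) := by
      intro x
      exact Real.log_div (by positivity) (by positivity)
    have hlogc : ContinuousAt Real.log ((α ^ 2)⁻¹) :=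
      Real.continuousAt_log (by positivity)
    have hlogtop : Tendsto (fun x : ℝ => Real.log (1 + x ^ 2) - Real.log (1 + (α * x + β) ^ 2))
        atTop (𝓝 (Real.log (α ^ 2)⁻¹)) := by
      have h0 := hratio.comp tendsto_inv_atTop_zero
      have h1 : Tendsto (fun x : ℝ => (1 + x ^ 2) / (1 + (α * x + β) ^ 2)) atTop
          (𝓝 ((α ^ 2)⁻¹)) := by
        apply h0.congr'
        filter_upwards [eventually_ne_atTop (0:ℝ)] with x hx using heqt x hx
      exact (hlogc.tendsto.comp h1).congr (fun x => hlog x)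
    have hlogbot : Tendsto (fun x : ℝ => Real.log (1 + x ^ 2) - Real.log (1 + (α * x + β) ^ 2))
        atBot (𝓝 (Real.log (α ^ 2)⁻¹)) := by
      have h0 := hratio.comp hinvbot
      have h1 : Tendsto (fun x : ℝ => (1 + x ^ 2) / (1 + (α * x + β) ^ 2)) atBot
          (𝓝 ((α ^ 2)⁻¹)) := by
        apply h0.congr'
        filter_upwards [eventually_ne_atBot (0:ℝ)] with x hx using heqt x hx
      exact (hlogc.tendsto.comp h1).congr (fun x => hlog x)
    have hlintop : Tendsto (fun x : ℝ => α * x + β) atTop atTop :=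
      tendsto_atTop_add_const_right atTop β (Tendsto.const_mul_atTop hα tendsto_id)
    have hlinbot : Tendsto (fun x : ℝ => α * x + β) atBot atBot :=
      tendsto_atBot_add_const_right atBot β (Tendsto.const_mul_atBot hα tendsto_id)
    have harctop : Tendsto (fun x : ℝ => Real.arctan (α * x + β)) atTop (𝓝 (π / 2)) :=
      (tendsto_nhds_of_tendsto_nhdsWithin tendsto_arctan_atTop).comp hlintop
    have harcbot : Tendsto (fun x : ℝ => Real.arctan (α * x + β)) atBot (𝓝 (-(π / 2))) :=
      (tendsto_nhds_of_tendsto_nhdsWithin tendsto_arctan_atBot).comp hlinbot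
    have htop : Tendsto F atTop
        (𝓝 (A / 2 * Real.log (α ^ 2)⁻¹ + B * (π / 2) + k * (π / 2))) :=
      ((hlogtop.const_mul (A / 2)).add
        (((tendsto_nhds_of_tendsto_nhdsWithin tendsto_arctan_atTop)).const_mul B)).add
        (harctop.const_mul k)
    have hbot : Tendsto F atBot
        (𝓝 (A / 2 * Real.log (α ^ 2)⁻¹ + B * (-(π / 2)) + k * (-(π / 2)))) :=
      ((hlogbot.const_mul (A / 2)).add
        (((tendsto_nhds_of_tendsto_nhdsWithin tendsto_arctan_atBot)).const_mul B)).add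
        (harcbot.const_mul k)
    rw [MeasureTheory.integral_of_hasDerivAt_of_tendsto hasF hint hbot htop]
    rw [hB, hk, hEdef]
    field_simp
    ring
end
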